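/- Let K be an n×n real symmetric matrix with all eigenvalues in [0,1]. Then all coefficients of the multiaffine polynomial det(I − K + KZ), Z = diag(z_1,...,z_n), are nonnegative and sum to 1; hence det(I−K+KZ) is a probability generating polynomial. -/

import Mathlib

open MvPolynomial Matrix

section Helpers

variable {N : Type*} [Fintype N] [DecidableEq N]

private lemma psd_det_nonneg {M : Matrix N N ℝ} (h : M.PosSemidef) : 0 ≤ M.det := by
  rw [h.isHermitian.det_eq_prod_eigenvalues]
  exact Finset.prod_nonneg fun i _ => by exact_mod_cast h.eigenvalues_nonneg i

private lemma psd_smul {A : Matrix N N ℝ} (hA : A.PosSemidef) {t : ℝ} (ht : 0 ≤ t) :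
    (t • A).PosSemidef := by
  rw [posSemidef_iff_dotProduct_mulVec]
  refine ⟨?_, fun x => ?_⟩
  · show (t • A)ᴴ = t • A
    rw [conjTranspose_smul, star_trivial, hA.1.eq]
  · rw [smul_mulVec, dotProduct_smul, smul_eq_mul]
    exact mul_nonneg ht (hA.dotProduct_mulVec_nonneg x)

private lemma psd_sub_sq {A : Matrix N N ℝ} (hA : A.PosSemidef) (hA' : (1 - A).PosSemidef) :
    (A - A * A).PosSemidef := by
  have h1 := hA.mul_mul_conjTranspose_same (1 - A)
  have h2 := hA'.mul_mul_conjTranspose_same A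
  have key : A - A * A = (1 - A) * A * (1 - A)ᴴ + A * (1 - A) * Aᴴ := by
    rw [hA'.isHermitian.eq, hA.isHermitian.eq]
    noncomm_ring
  rw [key]
  exact h1.add h2

private lemma inv_mul_psd {A : Matrix N N ℝ} (hA : A.PosSemidef) (hP : (1 - A).PosDef) :
    ((1 - A)⁻¹ * A).PosSemidef := by
  have hPu : IsUnit (1 - A).det := hP.det_pos.ne'.isUnit
  have hherm : ((1 - A)⁻¹)ᴴ = (1 - A)⁻¹ := by
    rw [conjTranspose_nonsing_inv, hP.isHermitian.eq]
  have key : (1 - A)⁻¹ * A = (1 - A)⁻¹ * (A - A * A) * ((1 - A)⁻¹)ᴴ := by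
    rw [hherm]
    calc (1 - A)⁻¹ * A
        = (1 - A)⁻¹ * A * ((1 - A) * (1 - A)⁻¹) := by
          rw [Matrix.mul_nonsing_inv _ hPu, Matrix.mul_one]
      _ = (1 - A)⁻¹ * (A * (1 - A)) * (1 - A)⁻¹ := by simp only [Matrix.mul_assoc]
      _ = (1 - A)⁻¹ * (A - A * A) * (1 - A)⁻¹ := by rw [mul_sub, mul_one]
  rw [key]
  exact (psd_sub_sq hA hP.posSemidef).mul_mul_conjTranspose_same _

private lemma det_mix_nonneg_of_posdef {A : Matrix N N ℝ} (hA : A.PosSemidef)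
    (hP : (1 - A).PosDef) (f : N → Bool) :
    0 ≤ (Matrix.of fun i j => if f j then A i j else (1 - A) i j).det := by
  have hPu : IsUnit (1 - A).det := hP.det_pos.ne'.isUnit
  set L : Matrix N N ℝ := (1 - A)⁻¹ * A with hLdef
  have hL : L.PosSemidef := inv_mul_psd hA hP
  set Nm : Matrix N N ℝ :=
    Matrix.of (fun i j => if f j then L i j else (1 : Matrix N N ℝ) i j) with hNm
  have hfac : (Matrix.of fun i j => if f j then A i j else (1 - A) i j) = (1 - A) * Nm := by
    ext i j
    rw [Matrix.mul_apply]
    by_cases hf : f j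
    · simp only [hNm, Matrix.of_apply, hf, if_true]
      calc A i j = ((1 - A) * L) i j := by
            rw [hLdef, Matrix.mul_nonsing_inv_cancel_left _ _ hPu]
        _ = ∑ k, (1 - A) i k * L k j := Matrix.mul_apply
    · simp [hNm, hf, Matrix.one_apply, mul_ite]
  rw [hfac, det_mul]
  refine mul_nonneg hP.det_pos.le ?_
  set e := (Equiv.sumCompl fun i => f i = true) with he
  rw [← det_submatrix_equiv_self e Nm]
  have hblock : Nm.submatrix e e =
      fromBlocks
        (L.submatrix (Subtype.val : {i // f i = true} → N) (Subtype.val : {i // f i = true} → N)) 0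
        (L.submatrix (Subtype.val : {i // ¬f i = true} → N) (Subtype.val : {i // f i = true} → N)) 1 := by
    ext ab cd
    cases ab with
    | inl a =>
      cases cd with
      | inl b => simp [he, hNm, b.prop]
      | inr b =>
        have hne : (a : N) ≠ (b : N) := by
          intro hc
          exact b.prop (hc ▸ a.prop)
        simp [he, hNm, b.prop, Matrix.one_apply, hne]
    | inr a =>
      cases cd with
      | inl b => simp [he, hNm, b.prop]
      | inr b =>
        by_cases hab : a = b
        · subst hab
          simp [he, hNm, a.prop, Matrix.one_apply]
        · have hne : (a : N) ≠ (b : N) := fun hc => hab (Subtype.ext hc)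
          simp [he, hNm, b.prop, Matrix.one_apply, hne, hab]
  rw [hblock, det_fromBlocks_zero₁₂, det_one, mul_one]
  exact psd_det_nonneg (hL.submatrix _)

private lemma det_mix_nonneg {A : Matrix N N ℝ} (hA : A.PosSemidef)
    (hA' : (1 - A).PosSemidef) (f : N → Bool) :
    0 ≤ (Matrix.of fun i j => if f j then A i j else (1 - A) i j).det := by
  set F : ℝ → ℝ := fun t =>
    (Matrix.of fun i j => if f j then (t • A) i j else (1 - t • A) i j).det with hF
  have hc : Continuous F := by
    apply Continuous.matrix_det
    apply continuous_matrix
    intro i j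
    cases hfj : f j
    · simp only [Matrix.of_apply, hfj, Bool.false_eq_true, if_false, Matrix.sub_apply,
        Matrix.smul_apply, smul_eq_mul]
      fun_prop
    · have : ∀ t : ℝ, (Matrix.of fun i j => if f j = true then (t • A) i j
          else (1 - t • A) i j) i j = t * A i j := by
        intro t; simp [hfj]
      simp only [this]
      fun_prop
  have hpos : ∀ t ∈ Set.Ioo (0 : ℝ) 1, 0 ≤ F t := by
    intro t ht
    have h1 : (t • A).PosSemidef := psd_smul hA ht.1.le
    have h2 : ((1 : Matrix N N ℝ) - t • A).PosDef := by
      have hesplit : (1 : Matrix N N ℝ) - t • A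
          = ((1 - t) • (1 : Matrix N N ℝ)) + t • ((1 : Matrix N N ℝ) - A) := by
        rw [smul_sub, sub_smul, one_smul]
        abel
      rw [hesplit]
      refine Matrix.PosDef.add_posSemidef ?_ (psd_smul hA' ht.1.le)
      rw [Matrix.smul_one_eq_diagonal]
      exact posDef_diagonal_iff.mpr fun i => by linarith [ht.2]
    have := det_mix_nonneg_of_posdef h1 h2 f
    simpa [hF] using this
  have hlim : Filter.Tendsto F (nhdsWithin 1 (Set.Iio 1)) (nhds (F 1)) :=
    (hc.tendsto 1).mono_left nhdsWithin_le_nhds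
  have h1 : 0 ≤ F 1 := by
    refine ge_of_tendsto hlim ?_
    filter_upwards [Ioo_mem_nhdsLT_of_mem
      (Set.mem_Ioc.mpr ⟨zero_lt_one, le_refl (1 : ℝ)⟩)] with t ht
    exact hpos t ht
  simpa [hF] using h1

end Helpers

private lemma prod_X_eq_monomial' {n : ℕ} (T : Finset (Fin n)) :
    (∏ i ∈ T, (X i : MvPolynomial (Fin n) ℝ))
      = monomial (∑ i ∈ T, Finsupp.single i 1) 1 := by
  classical
  induction T using Finset.induction_on with
  | empty => simp
  | @insert a s ha ih =>
    rw [Finset.prod_insert ha, ih, X, monomial_mul, one_mul, Finset.sum_insert ha]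

private lemma det_expand {n : ℕ} (K : Matrix (Fin n) (Fin n) ℝ) :
    ((1 : Matrix (Fin n) (Fin n) (MvPolynomial (Fin n) ℝ)) - K.map MvPolynomial.C
        + K.map MvPolynomial.C *
          Matrix.diagonal (fun i => (MvPolynomial.X i : MvPolynomial (Fin n) ℝ))).det
    = ∑ r : Fin n → Bool,
        MvPolynomial.C ((Matrix.of fun i j =>
            if r j then K i j else ((1 : Matrix (Fin n) (Fin n) ℝ) - K) i j).det)
          * ∏ i ∈ Finset.univ.filter (fun i => r i = true), MvPolynomial.X i := by
  classical
  set R := MvPolynomial (Fin n) ℝ with hR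
  set M : Matrix (Fin n) (Fin n) R :=
    (1 : Matrix (Fin n) (Fin n) R) - K.map MvPolynomial.C
      + K.map MvPolynomial.C * Matrix.diagonal (fun i => (MvPolynomial.X i : R)) with hM
  set w : Fin n → Bool → (Fin n → R) := fun i b =>
    if b then (MvPolynomial.X i : R) • (fun j => MvPolynomial.C (K j i))
    else (fun j => MvPolynomial.C (((1 : Matrix (Fin n) (Fin n) ℝ) - K) j i)) with hw
  have hMT : Mᵀ = Matrix.of (fun i => ∑ b : Bool, w i b) := by
    ext i j : 1
    have hRHS : (Matrix.of (fun i => ∑ b : Bool, w i b)) i j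
        = MvPolynomial.X i * MvPolynomial.C (K j i)
          + MvPolynomial.C (((1 : Matrix (Fin n) (Fin n) ℝ) - K) j i) := by
      simp [hw, Fintype.sum_bool, smul_eq_mul]
    rw [Matrix.transpose_apply, hRHS]
    simp only [hM, Matrix.add_apply, Matrix.sub_apply, Matrix.map_apply, Matrix.mul_diagonal,
      Matrix.one_apply, map_sub, apply_ite (⇑(MvPolynomial.C : ℝ →+* MvPolynomial (Fin n) ℝ)),
      _root_.map_one, _root_.map_zero]
    ring
  have step1 : M.det = ∑ r : Fin n → Bool,
      (Matrix.detRowAlternating (n := Fin n) (R := R)).toMultilinearMap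
        (fun i => w i (r i)) := by
    rw [← det_transpose M, hMT]
    exact (Matrix.detRowAlternating (n := Fin n) (R := R)).toMultilinearMap.map_sum
      (g := fun i b => w i b)
  rw [step1]
  refine Finset.sum_congr rfl fun r _ => ?_
  set A : Matrix (Fin n) (Fin n) ℝ :=
    Matrix.of (fun i j => if r j then K i j else ((1 : Matrix (Fin n) (Fin n) ℝ) - K) i j)
    with hA
  have h1 : (fun i => w i (r i))
      = fun i => (if r i then (MvPolynomial.X i : R) else 1) • (fun j => MvPolynomial.C (A j i)) := by
    funext i
    by_cases h : r i <;> simp [hw, hA, h]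
  rw [h1, MultilinearMap.map_smul_univ]
  have h2 : (Matrix.detRowAlternating (n := Fin n) (R := R)).toMultilinearMap
      (fun i j => MvPolynomial.C (A j i)) = MvPolynomial.C A.det := by
    have heq : (fun (i j : Fin n) => MvPolynomial.C (A j i))
        = ((MvPolynomial.C.mapMatrix A)ᵀ : Matrix (Fin n) (Fin n) R) := by
      funext i j
      simp [RingHom.mapMatrix_apply]
    show Matrix.det (Matrix.of fun i j => MvPolynomial.C (A j i)) = MvPolynomial.C A.det
    have : (Matrix.of fun (i j : Fin n) => MvPolynomial.C (A j i))
        = ((MvPolynomial.C.mapMatrix A)ᵀ : Matrix (Fin n) (Fin n) R) := by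
      ext i j; simp [RingHom.mapMatrix_apply]
    rw [this, det_transpose, ← RingHom.map_det]
  rw [h2, smul_eq_mul, mul_comm]
  congr 1
  rw [Finset.prod_filter]


private lemma eval_one_det {n : ℕ} (K : Matrix (Fin n) (Fin n) ℝ) :
    MvPolynomial.eval (fun _ => (1 : ℝ))
      (((1 : Matrix (Fin n) (Fin n) (MvPolynomial (Fin n) ℝ)) - K.map MvPolynomial.C
        + K.map MvPolynomial.C *
          Matrix.diagonal (fun i => (MvPolynomial.X i : MvPolynomial (Fin n) ℝ))).det) = 1 := by
  rw [RingHom.map_det]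
  have hone : (MvPolynomial.eval (fun _ => (1 : ℝ))).mapMatrix
      ((1 : Matrix (Fin n) (Fin n) (MvPolynomial (Fin n) ℝ)) - K.map MvPolynomial.C
        + K.map MvPolynomial.C *
          Matrix.diagonal (fun i => (MvPolynomial.X i : MvPolynomial (Fin n) ℝ)))
      = (1 : Matrix (Fin n) (Fin n) ℝ) := by
    ext i j
    simp [RingHom.mapMatrix_apply, Matrix.map_apply, Matrix.add_apply, Matrix.sub_apply,
      Matrix.mul_diagonal, Matrix.one_apply, apply_ite]
  rw [hone, det_one]

theorem dpp_marginal_kernel_is_pgp (n : ℕ) (K : Matrix (Fin n) (Fin n) ℝ)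
    (hK : K.PosSemidef) (hK' : ((1 : Matrix (Fin n) (Fin n) ℝ) - K).PosSemidef) :
    let g : MvPolynomial (Fin n) ℝ :=
      ((1 : Matrix (Fin n) (Fin n) (MvPolynomial (Fin n) ℝ)) - K.map MvPolynomial.C
        + K.map MvPolynomial.C *
          Matrix.diagonal (fun i => (MvPolynomial.X i : MvPolynomial (Fin n) ℝ))).det
    (∀ m ∈ g.support, ∀ i, m i ≤ 1)
    ∧ (∀ m, 0 ≤ g.coeff m)
    ∧ MvPolynomial.eval (fun _ => (1 : ℝ)) g = 1 := by
  classical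
  intro g
  have hg : g = ∑ r : Fin n → Bool,
      MvPolynomial.C ((Matrix.of fun i j =>
          if r j then K i j else ((1 : Matrix (Fin n) (Fin n) ℝ) - K) i j).det)
        * ∏ i ∈ Finset.univ.filter (fun i => r i = true), MvPolynomial.X i := det_expand K
  have hd : ∀ r : Fin n → Bool, (0 : ℝ) ≤ (Matrix.of fun i j =>
      if r j then K i j else ((1 : Matrix (Fin n) (Fin n) ℝ) - K) i j).det :=
    fun r => det_mix_nonneg hK hK' r
  refine ⟨?_, ?_, ?_⟩
  · intro m hm i
    rw [hg] at hm
    obtain ⟨r, -, hr⟩ := Finset.mem_biUnion.mp (MvPolynomial.support_sum hm)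
    rw [prod_X_eq_monomial', C_mul_monomial, mul_one] at hr
    rw [MvPolynomial.support_monomial] at hr
    split_ifs at hr
    · simp at hr
    · rw [Finset.mem_singleton] at hr
      subst hr
      rw [Finset.sum_apply']
      simp only [Finsupp.single_apply]
      rw [Finset.sum_ite_eq' _ i (fun _ => 1)]
      split <;> omega
  · intro m
    rw [hg, MvPolynomial.coeff_sum]
    refine Finset.sum_nonneg fun r _ => ?_
    rw [prod_X_eq_monomial', C_mul_monomial, mul_one, MvPolynomial.coeff_monomial]
    split
    · exact hd r
    · exact le_refl 0
  · exact eval_one_det K
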